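/- With the hypotheses of the Decompose lemma (M₁, M₂ ∈ ℝ^{d×k} full column rank, D diagonal with distinct entries, X = M₁M₂ᵀ, Y = M₁DM₂ᵀ, U₁, U₂ ∈ ℝ^{d×k} with range(U₁) = range(X), range(U₂) = range(Xᵀ)), the matrix (U₁ᵀYU₂)(U₁ᵀXU₂)^{-1} is similar to D; in particular its eigenvalues are exactly the diagonal entries of D. -/
import Mathlib


open Matrix

/-- If a `d × k` matrix has rank `k`, then `mulVecLin` is injective. -/
lemma aux_ker_eq_bot {d k : ℕ} (M : Matrix (Fin d) (Fin k) ℝ) (hM : M.rank = k) :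
    LinearMap.ker M.mulVecLin = ⊥ := by
  have h := M.mulVecLin.finrank_range_add_finrank_ker
  rw [show Module.finrank ℝ (LinearMap.range M.mulVecLin) = k from hM] at h
  simp only [Module.finrank_fintype_fun_eq_card, Fintype.card_fin] at h
  have : Module.finrank ℝ (LinearMap.ker M.mulVecLin) = 0 := by omega
  exact Submodule.finrank_eq_zero.mp this

/-- If a `d × k` matrix has rank `k`, then its transpose gives a surjective map. -/
lemma aux_range_transpose_top {d k : ℕ} (M : Matrix (Fin d) (Fin k) ℝ) (hM : M.rank = k) :
    LinearMap.range Mᵀ.mulVecLin = ⊤ := by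
  apply Submodule.eq_top_of_finrank_eq
  have : Mᵀ.rank = k := by rw [Matrix.rank_transpose]; exact hM
  rw [show Module.finrank ℝ (LinearMap.range Mᵀ.mulVecLin) = k from this]
  simp

/-- If `U` and `N` have the same range and `N` is injective, `Uᵀ * N` is invertible. -/
lemma aux_isUnit_det {d k : ℕ} (U N : Matrix (Fin d) (Fin k) ℝ)
    (hrange : LinearMap.range U.mulVecLin = LinearMap.range N.mulVecLin)
    (hker : LinearMap.ker N.mulVecLin = ⊥) :
    IsUnit (Uᵀ * N).det := by
  rw [isUnit_iff_ne_zero]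
  intro hdet
  obtain ⟨v, hvne, hveq⟩ := (Matrix.exists_mulVec_eq_zero_iff).mpr hdet
  have hmem : N.mulVec v ∈ LinearMap.range U.mulVecLin := by
    rw [hrange]; exact ⟨v, rfl⟩
  obtain ⟨w, hw⟩ := hmem
  simp only [Matrix.mulVecLin_apply] at hw
  have h1 : (Uᵀ * U).mulVec w = 0 := by
    rw [← Matrix.mulVec_mulVec, hw, Matrix.mulVec_mulVec]
    exact hveq
  have h2 : w ∈ LinearMap.ker (Uᵀ * U).mulVecLin := h1
  rw [Matrix.ker_mulVecLin_transpose_mul_self] at h2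
  have h3 : U.mulVec w = 0 := h2
  have h4 : N.mulVec v = 0 := by rw [← hw]; exact h3
  have : v ∈ LinearMap.ker N.mulVecLin := h4
  rw [hker] at this
  exact hvne (by simpa using this)

theorem decompose_similar_to_D (d k : ℕ)
    (M₁ M₂ : Matrix (Fin d) (Fin k) ℝ) (D : Matrix (Fin k) (Fin k) ℝ)
    (hM₁ : M₁.rank = k) (hM₂ : M₂.rank = k)
    (Ddiag : Fin k → ℝ) (hD : D = Matrix.diagonal Ddiag)
    (hdist : Function.Injective Ddiag)
    (X Y : Matrix (Fin d) (Fin d) ℝ)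
    (hX : X = M₁ * M₂ᵀ) (hY : Y = M₁ * D * M₂ᵀ)
    (U₁ U₂ : Matrix (Fin d) (Fin k) ℝ)
    (hU₁ : LinearMap.range U₁.mulVecLin = LinearMap.range X.mulVecLin)
    (hU₂ : LinearMap.range U₂.mulVecLin = LinearMap.range Xᵀ.mulVecLin) :
    (∃ P : Matrix (Fin k) (Fin k) ℝ, IsUnit P.det ∧
        P⁻¹ * ((U₁ᵀ * Y * U₂) * (U₁ᵀ * X * U₂)⁻¹) * P = D) ∧
    spectrum ℝ ((U₁ᵀ * Y * U₂) * (U₁ᵀ * X * U₂)⁻¹) = Set.range Ddiag := by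
  -- range X = range M₁
  have hXM₁ : LinearMap.range X.mulVecLin = LinearMap.range M₁.mulVecLin := by
    rw [hX, Matrix.mulVecLin_mul, LinearMap.range_comp, aux_range_transpose_top M₂ hM₂,
      Submodule.map_top]
  -- range Xᵀ = range M₂
  have hXM₂ : LinearMap.range Xᵀ.mulVecLin = LinearMap.range M₂.mulVecLin := by
    rw [hX, Matrix.transpose_mul, Matrix.transpose_transpose, Matrix.mulVecLin_mul,
      LinearMap.range_comp, aux_range_transpose_top M₁ hM₁, Submodule.map_top]
  -- A := U₁ᵀ M₁ is invertible
  set A := U₁ᵀ * M₁ with hAdef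
  have hA : IsUnit A.det :=
    aux_isUnit_det U₁ M₁ (hU₁.trans hXM₁) (aux_ker_eq_bot M₁ hM₁)
  -- B := M₂ᵀ U₂ is invertible
  set B := M₂ᵀ * U₂ with hBdef
  have hB : IsUnit B.det := by
    have h := aux_isUnit_det U₂ M₂ (hU₂.trans hXM₂) (aux_ker_eq_bot M₂ hM₂)
    have : B = (U₂ᵀ * M₂)ᵀ := by
      rw [Matrix.transpose_mul, Matrix.transpose_transpose]
    rw [this, Matrix.det_transpose]
    exact h
  -- key products
  have hXprod : U₁ᵀ * X * U₂ = A * B := by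
    rw [hX, hAdef, hBdef]; simp only [Matrix.mul_assoc]
  have hYprod : U₁ᵀ * Y * U₂ = A * D * B := by
    rw [hY, hAdef, hBdef]; simp only [Matrix.mul_assoc]
  have hkey : (U₁ᵀ * Y * U₂) * (U₁ᵀ * X * U₂)⁻¹ = A * D * A⁻¹ := by
    rw [hXprod, hYprod, Matrix.mul_inv_rev]
    calc A * D * B * (B⁻¹ * A⁻¹) = A * D * (B * B⁻¹) * A⁻¹ := by noncomm_ring
      _ = A * D * A⁻¹ := by rw [Matrix.mul_nonsing_inv B hB, mul_one]
  constructor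
  · refine ⟨A, hA, ?_⟩
    rw [hkey]
    calc A⁻¹ * (A * D * A⁻¹) * A = A⁻¹ * A * D * (A⁻¹ * A) := by noncomm_ring
      _ = D := by rw [Matrix.nonsing_inv_mul A hA]; simp
  · rw [hkey]
    clear_value A B
    have hAu : IsUnit A := (Matrix.isUnit_iff_isUnit_det A).mpr hA
    have hu : (hAu.unit : Matrix (Fin k) (Fin k) ℝ) = A := hAu.unit_spec
    have hinv : ((hAu.unit⁻¹ : (Matrix (Fin k) (Fin k) ℝ)ˣ) : Matrix (Fin k) (Fin k) ℝ) = A⁻¹ := by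
      rw [Matrix.coe_units_inv, hu]
    have heq : A * D * A⁻¹
        = (hAu.unit : Matrix (Fin k) (Fin k) ℝ) * D * (hAu.unit⁻¹ : (Matrix (Fin k) (Fin k) ℝ)ˣ) := by
      rw [hu, hinv]
    rw [heq, spectrum.units_conjugate, hD, spectrum_diagonal]
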